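/- Suppose g : ℝ≥0 → [0,1] is non-increasing, 0 < C = ∫_{ℝ²}g(‖x‖)dx < ∞, and lim_{x→∞} g(x) x² log²x exists and equals L ∈ [0, ∞]. With r_ρ = sqrt((log ρ + b)/(Cρ)), we have lim_{ρ→∞} (log ρ + b)/C · ∫_{ℝ² \ D(0, (1/2) r_ρ^{-1})} g(‖x‖)dx = 4πL/C, and hence lim_{ρ→∞} ρ · exp(-(log ρ + b)/C ∫_{D(0,(1/2)r_ρ^{-1})} g(‖x‖)dx) = e^{-b + 4πL/C}. -/

import Mathlib

open MeasureTheory Filter Real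

open MeasureTheory Filter Real Set Metric

private lemma vol_ball2 : volume.real (Metric.ball (0 : EuclideanSpace ℝ (Fin 2)) 1) = π := by
  rw [measureReal_def]
  rw [InnerProductSpace.volume_ball]
  rw [finrank_euclideanSpace_fin]
  norm_num
  exact Real.sq_sqrt pi_nonneg

private lemma radial_set (g : ℝ → ℝ) {s : Set ℝ} {B : Set (EuclideanSpace ℝ (Fin 2))}
    (hs : MeasurableSet s) (hB : MeasurableSet B)
    (h : ∀ x : EuclideanSpace ℝ (Fin 2), ‖x‖ ∈ s ↔ x ∈ B) :
    ∫ x in B, g ‖x‖ = 2 * π * ∫ y in Set.Ioi 0 ∩ s, y * g y := by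
  have key := MeasureTheory.integral_fun_norm_addHaar
    (volume : Measure (EuclideanSpace ℝ (Fin 2))) (Set.indicator s g)
  rw [finrank_euclideanSpace_fin] at key
  have l1 : (fun x : EuclideanSpace ℝ (Fin 2) => Set.indicator s g ‖x‖)
      = B.indicator (fun x => g ‖x‖) := by
    funext x
    by_cases hx : x ∈ B
    · rw [Set.indicator_of_mem ((h x).2 hx), Set.indicator_of_mem hx]
    · rw [Set.indicator_of_notMem (fun hh => hx ((h x).1 hh)),
        Set.indicator_of_notMem hx]
  rw [l1, MeasureTheory.integral_indicator hB] at key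
  rw [key, vol_ball2]
  have l2 : (fun y : ℝ => y ^ (2 - 1) • Set.indicator s g y)
      = Set.indicator s (fun y => y * g y) := by
    funext y
    by_cases hy : y ∈ s
    · simp [Set.indicator_of_mem hy]
    · simp [Set.indicator_of_notMem hy]
  rw [l2, MeasureTheory.setIntegral_indicator hs]
  rw [smul_eq_mul, two_smul]
  ring


private lemma sqrt_tendsto_atTop : Tendsto Real.sqrt atTop atTop := by
  refine (tendsto_rpow_atTop (by norm_num : (0:ℝ) < 1/2)).congr' ?_
  filter_upwards [eventually_ge_atTop (0:ℝ)] with x hx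
  exact (Real.sqrt_eq_rpow x).symm

private lemma loglog_hasDeriv {r : ℝ} (hr : 1 < r) :
    HasDerivAt (fun t : ℝ => -(Real.log t)⁻¹) ((r * Real.log r ^ 2)⁻¹) r := by
  have h0 : (0:ℝ) < r := lt_trans one_pos hr
  have hlog : Real.log r ≠ 0 := ne_of_gt (Real.log_pos hr)
  have h1 : HasDerivAt Real.log r⁻¹ r := Real.hasDerivAt_log (ne_of_gt h0)
  have h2 := (h1.inv hlog).neg
  exact h2.congr_deriv (by field_simp)

private lemma loglog_int {a : ℝ} (ha : 1 < a) :
    IntegrableOn (fun r : ℝ => (r * Real.log r ^ 2)⁻¹) (Set.Ioi a) ∧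
      ∫ r in Set.Ioi a, (r * Real.log r ^ 2)⁻¹ = (Real.log a)⁻¹ := by
  have hderiv : ∀ x ∈ Set.Ici a, HasDerivAt (fun t : ℝ => -(Real.log t)⁻¹)
      ((x * Real.log x ^ 2)⁻¹) x := fun x hx => loglog_hasDeriv (lt_of_lt_of_le ha hx)
  have hpos : ∀ x ∈ Set.Ioi a, 0 ≤ (x * Real.log x ^ 2)⁻¹ := by
    intro x hx
    have hx1 : 1 < x := lt_trans ha hx
    positivity
  have hlimit : Tendsto (fun t : ℝ => -(Real.log t)⁻¹) atTop (nhds 0) := by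
    rw [show (0:ℝ) = -0 by ring]
    exact (Real.tendsto_log_atTop.inv_tendsto_atTop).neg
  refine ⟨integrableOn_Ioi_deriv_of_nonneg' hderiv hpos hlimit, ?_⟩
  rw [integral_Ioi_of_hasDerivAt_of_nonneg' hderiv hpos hlimit]
  ring

private lemma tail_integrable (g : ℝ → ℝ) (C : ℝ)
    (hg01 : ∀ x, 0 ≤ x → 0 ≤ g x ∧ g x ≤ 1)
    (hmono : AntitoneOn g (Set.Ici 0))
    (hint : Integrable (fun x : EuclideanSpace ℝ (Fin 2) => g ‖x‖))
    (hC : C = ∫ x : EuclideanSpace ℝ (Fin 2), g ‖x‖) :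
    IntegrableOn (fun y => y * g y) (Set.Ioi 0) := by
  have hmeas : AEStronglyMeasurable (fun y => y * g y) (volume.restrict (Set.Ioi (0:ℝ))) := by
    exact (aemeasurable_id.mul (aemeasurable_restrict_of_antitoneOn measurableSet_Ioi
      (hmono.mono Set.Ioi_subset_Ici_self))).aestronglyMeasurable
  have hfi : ∀ n : ℕ, IntegrableOn (fun y => y * g y) (Set.Ioc 0 (n:ℝ)) := by
    intro n
    refine ⟨hmeas.mono_measure (Measure.restrict_mono Set.Ioc_subset_Ioi_self le_rfl),
      HasFiniteIntegral.restrict_of_bounded (C := (n:ℝ)) (by simp) ?_⟩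
    filter_upwards [ae_restrict_mem measurableSet_Ioc] with y hy
    have h1 := hg01 y hy.1.le
    rw [Real.norm_eq_abs, abs_of_nonneg (mul_nonneg hy.1.le h1.1)]
    calc y * g y ≤ y * 1 := mul_le_mul_of_nonneg_left h1.2 hy.1.le
    _ ≤ n := by rw [mul_one]; exact hy.2
  have hball : ∀ n : ℕ, ∫ y in Set.Ioc 0 (n:ℝ), y * g y ≤ C / (2 * π) := by
    intro n
    have h1 : Set.Ioc (0:ℝ) (n:ℝ) = Set.Ioi (0:ℝ) ∩ Set.Iic (n:ℝ) := by
      rw [Set.Ioi_inter_Iic]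
    have h2 := radial_set g (measurableSet_Iic (a := (n:ℝ)))
      (measurableSet_closedBall (x := (0 : EuclideanSpace ℝ (Fin 2))) (ε := (n:ℝ)))
      (fun x => by simp [Metric.mem_closedBall, dist_zero_right])
    rw [← h1] at h2
    have h3 : ∫ x in Metric.closedBall (0 : EuclideanSpace ℝ (Fin 2)) (n:ℝ), g ‖x‖ ≤ C := by
      rw [hC]
      exact setIntegral_le_integral hint
        (Filter.Eventually.of_forall (fun x => (hg01 _ (norm_nonneg x)).1))
    rw [le_div_iff₀ (by positivity)]
    calc (∫ y in Set.Ioc 0 (n:ℝ), y * g y) * (2 * π)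
        = 2 * π * ∫ y in Set.Ioc 0 (n:ℝ), y * g y := by ring
      _ = ∫ x in Metric.closedBall (0 : EuclideanSpace ℝ (Fin 2)) (n:ℝ), g ‖x‖ := h2.symm
      _ ≤ C := h3
  refine integrableOn_Ioi_of_intervalIntegral_norm_bounded (C / (2 * π)) 0 hfi
    tendsto_natCast_atTop_atTop ?_
  filter_upwards with n
  rw [intervalIntegral.integral_of_le (Nat.cast_nonneg n)]
  calc ∫ y in Set.Ioc 0 (n:ℝ), ‖y * g y‖
      = ∫ y in Set.Ioc 0 (n:ℝ), y * g y := by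
        refine setIntegral_congr_fun measurableSet_Ioc (fun y hy => ?_)
        exact abs_of_nonneg (mul_nonneg hy.1.le (hg01 y hy.1.le).1)
    _ ≤ C / (2 * π) := hball n


private lemma phi_le (g : ℝ → ℝ) (hInt : IntegrableOn (fun y => y * g y) (Set.Ioi 0))
    (c R₀ : ℝ) (hR₀ : 1 < R₀)
    (hc : ∀ r, R₀ ≤ r → g r * r ^ 2 * Real.log r ^ 2 ≤ c) :
    ∀ R, R₀ ≤ R → Real.log R * ∫ y in Set.Ioi R, y * g y ≤ c := by
  intro R hR
  have hR1 : 1 < R := lt_of_lt_of_le hR₀ hR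
  have hlogR : 0 < Real.log R := Real.log_pos hR1
  have hIR := loglog_int hR1
  have h1 : ∫ y in Set.Ioi R, y * g y ≤ c * (Real.log R)⁻¹ := by
    have hmono2 : ∫ y in Set.Ioi R, y * g y ≤ ∫ y in Set.Ioi R, c * (y * Real.log y ^ 2)⁻¹ := by
      refine setIntegral_mono_on (hInt.mono_set (Set.Ioi_subset_Ioi (by linarith)))
        (hIR.1.const_mul c) measurableSet_Ioi ?_
      intro y hy
      have hy1 : 1 < y := lt_trans hR1 hy
      have hy0 : 0 < y := lt_trans one_pos hy1
      have hly : 0 < Real.log y := Real.log_pos hy1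
      have key : y * g y = (g y * y ^ 2 * Real.log y ^ 2) / (y * Real.log y ^ 2) := by
        field_simp
      rw [key, div_eq_mul_inv]
      exact mul_le_mul_of_nonneg_right (hc y (le_of_lt (lt_of_le_of_lt hR hy)))
        (by positivity)
    calc ∫ y in Set.Ioi R, y * g y ≤ ∫ y in Set.Ioi R, c * (y * Real.log y ^ 2)⁻¹ := hmono2
      _ = c * ∫ y in Set.Ioi R, (y * Real.log y ^ 2)⁻¹ := by rw [integral_const_mul]
      _ = c * (Real.log R)⁻¹ := by rw [hIR.2]
  calc Real.log R * ∫ y in Set.Ioi R, y * g y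
      ≤ Real.log R * (c * (Real.log R)⁻¹) := mul_le_mul_of_nonneg_left h1 hlogR.le
    _ = c := by field_simp
private lemma phi_ge (g : ℝ → ℝ) (hInt : IntegrableOn (fun y => y * g y) (Set.Ioi 0))
    (c R₀ : ℝ) (hR₀ : 1 < R₀)
    (hc : ∀ r, R₀ ≤ r → c ≤ g r * r ^ 2 * Real.log r ^ 2) :
    ∀ R, R₀ ≤ R → c ≤ Real.log R * ∫ y in Set.Ioi R, y * g y := by
  intro R hR
  have hR1 : 1 < R := lt_of_lt_of_le hR₀ hR
  have hlogR : 0 < Real.log R := Real.log_pos hR1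
  have hIR := loglog_int hR1
  have h1 : c * (Real.log R)⁻¹ ≤ ∫ y in Set.Ioi R, y * g y := by
    have hmono2 : ∫ y in Set.Ioi R, c * (y * Real.log y ^ 2)⁻¹ ≤ ∫ y in Set.Ioi R, y * g y := by
      refine setIntegral_mono_on (hIR.1.const_mul c)
        (hInt.mono_set (Set.Ioi_subset_Ioi (by linarith))) measurableSet_Ioi ?_
      intro y hy
      have hy1 : 1 < y := lt_trans hR1 hy
      have hy0 : 0 < y := lt_trans one_pos hy1
      have hly : 0 < Real.log y := Real.log_pos hy1
      have key : y * g y = (g y * y ^ 2 * Real.log y ^ 2) / (y * Real.log y ^ 2) := by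
        field_simp
      rw [key, div_eq_mul_inv]
      exact mul_le_mul_of_nonneg_right (hc y (le_of_lt (lt_of_le_of_lt hR hy)))
        (by positivity)
    calc c * (Real.log R)⁻¹ = c * ∫ y in Set.Ioi R, (y * Real.log y ^ 2)⁻¹ := by rw [hIR.2]
      _ = ∫ y in Set.Ioi R, c * (y * Real.log y ^ 2)⁻¹ := by rw [integral_const_mul]
      _ ≤ ∫ y in Set.Ioi R, y * g y := hmono2
  calc c = Real.log R * (c * (Real.log R)⁻¹) := by field_simp
    _ ≤ Real.log R * ∫ y in Set.Ioi R, y * g y := mul_le_mul_of_nonneg_left h1 hlogR.le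

private lemma key_tail (g : ℝ → ℝ) (L : ENNReal)
    (hg0 : ∀ x, 0 ≤ x → 0 ≤ g x)
    (hInt : IntegrableOn (fun y => y * g y) (Set.Ioi 0))
    (hlim : Tendsto (fun x : ℝ => ENNReal.ofReal (g x * x ^ 2 * (Real.log x) ^ 2))
      atTop (nhds L)) :
    Tendsto (fun R : ℝ => ENNReal.ofReal (Real.log R * ∫ y in Set.Ioi R, y * g y))
      atTop (nhds L) := by
  by_cases hL : L = ⊤
  · rw [hL]
    rw [hL] at hlim
    have h1 : Tendsto (fun R : ℝ => Real.log R * ∫ y in Set.Ioi R, y * g y) atTop atTop := by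
      rw [Filter.tendsto_atTop]
      intro M
      have h2 : ∀ᶠ r in atTop, ENNReal.ofReal |M| < ENNReal.ofReal (g r * r ^ 2 * Real.log r ^ 2) :=
        hlim.eventually (lt_mem_nhds ENNReal.ofReal_lt_top)
      obtain ⟨R₁, hR₁⟩ := eventually_atTop.1 h2
      refine eventually_atTop.2 ⟨max R₁ 2, fun R hR => ?_⟩
      refine le_trans (le_abs_self M) (phi_ge g hInt |M| (max R₁ 2) (by
        simp only [lt_max_iff]; right; norm_num) (fun r hr => ?_) R hR)
      exact ((ENNReal.ofReal_lt_ofReal_iff_of_nonneg (abs_nonneg M)).1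
        (hR₁ r (le_trans (le_max_left _ _) hr))).le
    exact ENNReal.tendsto_ofReal_atTop.comp h1
  · have hreal : Tendsto (fun x : ℝ => g x * x ^ 2 * Real.log x ^ 2) atTop (nhds L.toReal) := by
      have h1 := (ENNReal.tendsto_toReal hL).comp hlim
      refine h1.congr' ?_
      filter_upwards [eventually_ge_atTop (0:ℝ)] with x hx
      exact ENNReal.toReal_ofReal
        (mul_nonneg (mul_nonneg (hg0 x hx) (sq_nonneg x)) (sq_nonneg _))
    have h2 : Tendsto (fun R : ℝ => Real.log R * ∫ y in Set.Ioi R, y * g y) atTop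
        (nhds L.toReal) := by
      rw [Metric.tendsto_atTop]
      intro ε hε
      rw [Metric.tendsto_atTop] at hreal
      obtain ⟨R₁, hR₁⟩ := hreal (ε / 2) (by linarith)
      refine ⟨max R₁ 2, fun R hR => ?_⟩
      have hub := phi_le g hInt (L.toReal + ε / 2) (max R₁ 2)
        (by simp only [lt_max_iff]; right; norm_num)
        (fun r hr => by
          have := hR₁ r (le_trans (le_max_left _ _) hr)
          rw [Real.dist_eq] at this
          linarith [abs_lt.1 this |>.2]) R hR
      have hlb := phi_ge g hInt (L.toReal - ε / 2) (max R₁ 2)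
        (by simp only [lt_max_iff]; right; norm_num)
        (fun r hr => by
          have := hR₁ r (le_trans (le_max_left _ _) hr)
          rw [Real.dist_eq] at this
          linarith [abs_lt.1 this |>.1]) R hR
      rw [Real.dist_eq, abs_lt]
      constructor <;> linarith
    have h3 := (ENNReal.continuous_ofReal.tendsto L.toReal).comp h2
    rwa [ENNReal.ofReal_toReal hL] at h3


private lemma ratio_add_const (b : ℝ) : Tendsto (fun u : ℝ => (u + b) / u) atTop (nhds 1) := by
  have h1 : Tendsto (fun u : ℝ => 1 + b / u) atTop (nhds (1 + 0)) :=
    tendsto_const_nhds.add (Tendsto.div_atTop tendsto_const_nhds tendsto_id)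
  rw [add_zero] at h1
  refine h1.congr' ?_
  filter_upwards [eventually_gt_atTop (0:ℝ)] with u hu
  field_simp

private lemma log_add_div (b : ℝ) :
    Tendsto (fun u : ℝ => Real.log (u + b) / u) atTop (nhds 0) := by
  have e1 : Tendsto (fun v : ℝ => Real.log v / v) atTop (nhds 0) :=
    Real.isLittleO_log_id_atTop.tendsto_div_nhds_zero
  have e2 : Tendsto (fun u : ℝ => Real.log (u + b) / (u + b)) atTop (nhds 0) :=
    e1.comp (tendsto_atTop_add_const_right _ b tendsto_id)
  have e4 := e2.mul (ratio_add_const b)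
  rw [zero_mul] at e4
  refine e4.congr' ?_
  filter_upwards [eventually_gt_atTop (0:ℝ), eventually_gt_atTop (-b)] with u hu hub
  have h1 : u + b ≠ 0 := by linarith
  have h2 : u ≠ 0 := ne_of_gt hu
  field_simp

private lemma W_eq (C b ρ : ℝ) :
    (1/2) * (Real.sqrt ((Real.log ρ + b)/(C*ρ)))⁻¹
      = (1/2) * Real.sqrt ((C*ρ)/(Real.log ρ + b)) := by
  rw [← Real.sqrt_inv, inv_div]

private lemma W_tendsto {C : ℝ} (b : ℝ) (hC : 0 < C) :
    Tendsto (fun ρ : ℝ => (1/2) * (Real.sqrt ((Real.log ρ + b)/(C*ρ)))⁻¹) atTop atTop := by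
  have h1 : Tendsto (fun ρ : ℝ => (Real.log ρ + b)/ρ) atTop (nhds 0) := by
    have := (Real.isLittleO_log_id_atTop.tendsto_div_nhds_zero).add
      (Tendsto.div_atTop (tendsto_const_nhds (x := b)) tendsto_id)
    rw [add_zero] at this
    exact this.congr (fun ρ => (add_div _ _ _).symm)
  have h2 : ∀ᶠ ρ : ℝ in atTop, (Real.log ρ + b)/ρ ∈ Set.Ioi (0:ℝ) := by
    filter_upwards [eventually_gt_atTop (0:ℝ),
      (tendsto_atTop_add_const_right _ b Real.tendsto_log_atTop).eventually
        (eventually_gt_atTop (0:ℝ))] with ρ h1' h2'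
    exact div_pos h2' h1'
  have h3 : Tendsto (fun ρ : ℝ => (Real.log ρ + b)/ρ) atTop (nhdsWithin 0 (Set.Ioi 0)) :=
    tendsto_nhdsWithin_iff.2 ⟨h1, h2⟩
  have h4 : Tendsto (fun ρ : ℝ => ρ / (Real.log ρ + b)) atTop atTop :=
    (tendsto_inv_nhdsGT_zero.comp h3).congr (fun ρ => by rw [Function.comp_apply, inv_div])
  have h5 : Tendsto (fun ρ : ℝ => C * ρ / (Real.log ρ + b)) atTop atTop :=
    (h4.const_mul_atTop hC).congr (fun ρ => by rw [mul_div_assoc])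
  have h6 := (sqrt_tendsto_atTop.comp h5).const_mul_atTop (by norm_num : (0:ℝ) < 1/2)
  exact h6.congr (fun ρ => (W_eq C b ρ).symm)

private lemma logW_eq {C b ρ : ℝ} (hC : 0 < C) (hρ : 1 < ρ) (hlb : 0 < Real.log ρ + b) :
    Real.log ((1/2) * (Real.sqrt ((Real.log ρ + b)/(C*ρ)))⁻¹)
      = Real.log (1/2)
        + (1/2) * (Real.log C + Real.log ρ - Real.log (Real.log ρ + b)) := by
  have hρ0 : (0:ℝ) < ρ := lt_trans one_pos hρ
  have hq : 0 < C * ρ / (Real.log ρ + b) := div_pos (mul_pos hC hρ0) hlb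
  rw [W_eq, Real.log_mul (by norm_num) (ne_of_gt (Real.sqrt_pos.2 hq)),
    Real.log_sqrt hq.le, Real.log_div (ne_of_gt (mul_pos hC hρ0)) (ne_of_gt hlb),
    Real.log_mul hC.ne' hρ0.ne']
  ring

private lemma logW_ratio {C : ℝ} (b : ℝ) (hC : 0 < C) :
    Tendsto (fun ρ : ℝ => (Real.log ρ + b)
      / Real.log ((1/2) * (Real.sqrt ((Real.log ρ + b)/(C*ρ)))⁻¹)) atTop (nhds 2) := by
  have hltop : Tendsto (fun ρ : ℝ => Real.log ρ + b) atTop atTop :=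
    tendsto_atTop_add_const_right _ b Real.tendsto_log_atTop
  have hWtop := W_tendsto b hC
  have num : Tendsto (fun ρ : ℝ => (Real.log ρ + b) / Real.log ρ) atTop (nhds 1) :=
    (ratio_add_const b).comp Real.tendsto_log_atTop
  have den : Tendsto (fun ρ : ℝ =>
      Real.log ((1/2) * (Real.sqrt ((Real.log ρ + b)/(C*ρ)))⁻¹) / Real.log ρ)
      atTop (nhds (1/2)) := by
    have c1 : Tendsto (fun ρ : ℝ => Real.log (1/2) / Real.log ρ) atTop (nhds 0) :=
      Tendsto.div_atTop tendsto_const_nhds Real.tendsto_log_atTop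
    have c2 : Tendsto (fun ρ : ℝ => Real.log C / Real.log ρ) atTop (nhds 0) :=
      Tendsto.div_atTop tendsto_const_nhds Real.tendsto_log_atTop
    have c3 : Tendsto (fun ρ : ℝ => Real.log (Real.log ρ + b) / Real.log ρ) atTop (nhds 0) :=
      (log_add_div b).comp Real.tendsto_log_atTop
    have hcomb := c1.add ((c2.add ((tendsto_const_nhds (x := (1:ℝ))).sub c3)).const_mul (1/2))
    have hval : (0:ℝ) + 1/2 * (0 + (1 - 0)) = 1/2 := by norm_num
    rw [hval] at hcomb
    refine hcomb.congr' ?_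
    filter_upwards [eventually_gt_atTop (1:ℝ),
      hltop.eventually (eventually_gt_atTop (0:ℝ))] with ρ hρ hlb
    have hlogρ : Real.log ρ ≠ 0 := ne_of_gt (Real.log_pos hρ)
    rw [logW_eq hC hρ hlb]
    field_simp
    ring
  have hfin := num.div den (by norm_num : (1/2:ℝ) ≠ 0)
  have hval2 : (1:ℝ)/(1/2) = 2 := by norm_num
  rw [hval2] at hfin
  refine hfin.congr' ?_
  filter_upwards [eventually_gt_atTop (1:ℝ),
    hWtop.eventually (eventually_gt_atTop (1:ℝ))] with ρ hρ hW
  have hlogρ : Real.log ρ ≠ 0 := ne_of_gt (Real.log_pos hρ)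
  have hlogW : Real.log ((1/2) * (Real.sqrt ((Real.log ρ + b)/(C*ρ)))⁻¹) ≠ 0 :=
    ne_of_gt (Real.log_pos hW)
  rw [Pi.div_apply, div_div_div_cancel_right₀ hlogρ]


private lemma compl_radial (g : ℝ → ℝ) {R : ℝ} (hR : 0 ≤ R) :
    ∫ x in (Metric.closedBall (0 : EuclideanSpace ℝ (Fin 2)) R)ᶜ, g ‖x‖
      = 2 * π * ∫ y in Set.Ioi R, y * g y := by
  have h := radial_set g (measurableSet_Ioi (a := R)) (measurableSet_closedBall (x := (0 : EuclideanSpace ℝ (Fin 2))) (ε := R)).compl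
    (fun x => by
      simp only [Set.mem_Ioi, Set.mem_compl_iff, Metric.mem_closedBall, dist_zero_right, not_le])
  rw [h, Set.Ioi_inter_Ioi, max_eq_right hR]

private lemma first_limit (g : ℝ → ℝ) (C b : ℝ) (L : ENNReal) (hCpos : 0 < C)
    (hInt : IntegrableOn (fun y => y * g y) (Set.Ioi 0))
    (hKEY : Tendsto (fun R : ℝ => ENNReal.ofReal (Real.log R * ∫ y in Set.Ioi R, y * g y))
      atTop (nhds L)) :
    Tendsto
      (fun ρ : ℝ => ENNReal.ofReal ((Real.log ρ + b) / C *
        ∫ x in (Metric.closedBall (0 : EuclideanSpace ℝ (Fin 2))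
            ((1 / 2) * (Real.sqrt ((Real.log ρ + b) / (C * ρ)))⁻¹))ᶜ, g ‖x‖))
      atTop (nhds (ENNReal.ofReal (4 * π / C) * L)) := by
  have hWtop := W_tendsto b hCpos
  have hratio := logW_ratio b hCpos
  have hltop : Tendsto (fun ρ : ℝ => Real.log ρ + b) atTop atTop :=
    tendsto_atTop_add_const_right _ b Real.tendsto_log_atTop
  have h1 : Tendsto (fun ρ : ℝ =>
      ENNReal.ofReal ((Real.log ρ + b)
        / Real.log ((1 / 2) * (Real.sqrt ((Real.log ρ + b) / (C * ρ)))⁻¹) * (2 * π / C)))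
      atTop (nhds (ENNReal.ofReal (4 * π / C))) := by
    have := ENNReal.tendsto_ofReal (hratio.mul_const (2 * π / C))
    have hval : (2:ℝ) * (2 * π / C) = 4 * π / C := by ring
    rwa [hval] at this
  have h2 : Tendsto (fun ρ : ℝ =>
      ENNReal.ofReal (Real.log ((1 / 2) * (Real.sqrt ((Real.log ρ + b) / (C * ρ)))⁻¹)
        * ∫ y in Set.Ioi ((1 / 2) * (Real.sqrt ((Real.log ρ + b) / (C * ρ)))⁻¹), y * g y))
      atTop (nhds L) := hKEY.comp hWtop
  have hmul := ENNReal.Tendsto.mul h1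
    (Or.inl (ENNReal.ofReal_pos.2 (by positivity)).ne') h2 (Or.inr ENNReal.ofReal_ne_top)
  refine hmul.congr' ?_
  filter_upwards [hWtop.eventually (eventually_gt_atTop (1:ℝ)),
    hltop.eventually (eventually_gt_atTop (0:ℝ))] with ρ hW hlb
  have hW0 : (0:ℝ) ≤ (1 / 2) * (Real.sqrt ((Real.log ρ + b) / (C * ρ)))⁻¹ := by linarith
  have hlogW : 0 < Real.log ((1 / 2) * (Real.sqrt ((Real.log ρ + b) / (C * ρ)))⁻¹) :=
    Real.log_pos hW
  have hfac : (0:ℝ) ≤ (Real.log ρ + b)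
      / Real.log ((1 / 2) * (Real.sqrt ((Real.log ρ + b) / (C * ρ)))⁻¹) * (2 * π / C) :=
    mul_nonneg (div_nonneg hlb.le hlogW.le) (by positivity)
  rw [compl_radial g hW0, ← ENNReal.ofReal_mul hfac]
  congr 1
  have hgen : ∀ (A w q : ℝ), w ≠ 0 → A / w * (2 * π / C) * (w * q) = A / C * (2 * π * q) := by
    intro A w q hw
    field_simp
  exact hgen _ _ _ hlogW.ne'

/-- Suppose `g : ℝ≥0 → [0,1]` is non-increasing, `0 < C = ∫_{ℝ²} g(‖x‖)dx < ∞`,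
and `lim_{x→∞} g(x) x² log²x = L ∈ [0,∞]` (the limit being taken in `ℝ≥0∞` so
that `L = ∞` is allowed).  With `r_ρ = sqrt((log ρ + b)/(Cρ))`,
`lim_{ρ→∞} (log ρ + b)/C · ∫_{ℝ² \ D(0,(1/2) r_ρ^{-1})} g(‖x‖) dx = 4πL/C`,
and hence
`lim_{ρ→∞} ρ · exp(-(log ρ + b)/C ∫_{D(0,(1/2) r_ρ^{-1})} g(‖x‖) dx)
  = e^{-b + 4πL/C}` (an infinite limit when `L = ∞`). -/
theorem stmt_10 (g : ℝ → ℝ) (C b : ℝ) (L : ENNReal)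
    (hg01 : ∀ x, 0 ≤ x → 0 ≤ g x ∧ g x ≤ 1)
    (hmono : AntitoneOn g (Set.Ici 0))
    (hint : Integrable (fun x : EuclideanSpace ℝ (Fin 2) => g ‖x‖))
    (hC : C = ∫ x : EuclideanSpace ℝ (Fin 2), g ‖x‖) (hCpos : 0 < C)
    (hlim : Tendsto (fun x : ℝ => ENNReal.ofReal (g x * x ^ 2 * (Real.log x) ^ 2))
      atTop (nhds L)) :
    Tendsto
        (fun ρ : ℝ =>
          ENNReal.ofReal
            ((Real.log ρ + b) / C *
              ∫ x in (Metric.closedBall (0 : EuclideanSpace ℝ (Fin 2))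
                  ((1 / 2) * (Real.sqrt ((Real.log ρ + b) / (C * ρ)))⁻¹))ᶜ,
                g ‖x‖))
        atTop (nhds (ENNReal.ofReal (4 * π / C) * L)) ∧
      Tendsto
        (fun ρ : ℝ =>
          ENNReal.ofReal
            (ρ *
              Real.exp
                (-((Real.log ρ + b) / C *
                    ∫ x in Metric.closedBall (0 : EuclideanSpace ℝ (Fin 2))
                        ((1 / 2) * (Real.sqrt ((Real.log ρ + b) / (C * ρ)))⁻¹),
                      g ‖x‖))))
        atTop
        (nhds
          (ENNReal.ofReal (Real.exp (-b)) *
            (if L = ⊤ then ⊤ else ENNReal.ofReal (Real.exp (4 * π * L.toReal / C))))) := by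
  have hg0 : ∀ x, 0 ≤ x → 0 ≤ g x := fun x hx => (hg01 x hx).1
  have hInt := tail_integrable g C hg01 hmono hint hC
  have hKEY := key_tail g L hg0 hInt hlim
  have hA := first_limit g C b L hCpos hInt hKEY
  refine ⟨hA, ?_⟩
  have hltop : Tendsto (fun ρ : ℝ => Real.log ρ + b) atTop atTop :=
    tendsto_atTop_add_const_right _ b Real.tendsto_log_atTop
  -- split of the ball integral
  have hsplit : ∀ ρ : ℝ,
      (∫ x in Metric.closedBall (0 : EuclideanSpace ℝ (Fin 2))
          ((1 / 2) * (Real.sqrt ((Real.log ρ + b) / (C * ρ)))⁻¹), g ‖x‖)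
        = C - ∫ x in (Metric.closedBall (0 : EuclideanSpace ℝ (Fin 2))
            ((1 / 2) * (Real.sqrt ((Real.log ρ + b) / (C * ρ)))⁻¹))ᶜ, g ‖x‖ := by
    intro ρ
    have h := MeasureTheory.integral_add_compl
      (measurableSet_closedBall (x := (0 : EuclideanSpace ℝ (Fin 2)))
        (ε := (1 / 2) * (Real.sqrt ((Real.log ρ + b) / (C * ρ)))⁻¹)) hint
    rw [← hC] at h
    linarith
  -- key eventual identity
  have hev : (fun ρ : ℝ => ENNReal.ofReal (Real.exp (-b)) *
      ENNReal.ofReal (Real.exp ((Real.log ρ + b) / C *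
        ∫ x in (Metric.closedBall (0 : EuclideanSpace ℝ (Fin 2))
            ((1 / 2) * (Real.sqrt ((Real.log ρ + b) / (C * ρ)))⁻¹))ᶜ, g ‖x‖)))
      =ᶠ[atTop] (fun ρ : ℝ =>
        ENNReal.ofReal (ρ * Real.exp (-((Real.log ρ + b) / C *
          ∫ x in Metric.closedBall (0 : EuclideanSpace ℝ (Fin 2))
              ((1 / 2) * (Real.sqrt ((Real.log ρ + b) / (C * ρ)))⁻¹), g ‖x‖)))) := by
    filter_upwards [eventually_gt_atTop (0:ℝ)] with ρ hρ
    rw [hsplit ρ]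
    set T := ∫ x in (Metric.closedBall (0 : EuclideanSpace ℝ (Fin 2))
        ((1 / 2) * (Real.sqrt ((Real.log ρ + b) / (C * ρ)))⁻¹))ᶜ, g ‖x‖ with hT
    have harg : -((Real.log ρ + b) / C * (C - T))
        = -Real.log ρ + -b + (Real.log ρ + b) / C * T := by
      field_simp
      ring
    rw [harg, Real.exp_add, Real.exp_add, Real.exp_neg (Real.log ρ), Real.exp_log hρ,
      ← ENNReal.ofReal_mul (Real.exp_pos _).le]
    congr 1
    field_simp
  by_cases hL : L = ⊤
  · rw [if_pos hL]
    rw [hL, ENNReal.mul_top (ENNReal.ofReal_pos.2 (by positivity)).ne'] at hA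
    have hAtop : Tendsto (fun ρ : ℝ => (Real.log ρ + b) / C *
        ∫ x in (Metric.closedBall (0 : EuclideanSpace ℝ (Fin 2))
            ((1 / 2) * (Real.sqrt ((Real.log ρ + b) / (C * ρ)))⁻¹))ᶜ, g ‖x‖) atTop atTop := by
      rw [Filter.tendsto_atTop]
      intro M
      filter_upwards [hA.eventually (lt_mem_nhds (show ENNReal.ofReal |M| < ⊤ from ENNReal.ofReal_lt_top))] with ρ h
      exact (le_abs_self M).trans
        ((ENNReal.ofReal_lt_ofReal_iff_of_nonneg (abs_nonneg M)).1 h).le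
    have h2 := ENNReal.tendsto_ofReal_atTop.comp (Real.tendsto_exp_atTop.comp hAtop)
    exact (ENNReal.Tendsto.const_mul h2 (Or.inl (by simp))).congr' hev
  · rw [if_neg hL]
    have hKne : ENNReal.ofReal (4 * π / C) * L ≠ ⊤ := ENNReal.mul_ne_top ENNReal.ofReal_ne_top hL
    have h1 := (ENNReal.tendsto_toReal hKne).comp hA
    have hAreal : Tendsto (fun ρ : ℝ => (Real.log ρ + b) / C *
        ∫ x in (Metric.closedBall (0 : EuclideanSpace ℝ (Fin 2))
            ((1 / 2) * (Real.sqrt ((Real.log ρ + b) / (C * ρ)))⁻¹))ᶜ, g ‖x‖) atTop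
        (nhds (4 * π * L.toReal / C)) := by
      have hKval : (ENNReal.ofReal (4 * π / C) * L).toReal = 4 * π * L.toReal / C := by
        rw [ENNReal.toReal_mul, ENNReal.toReal_ofReal (by positivity)]
        ring
      rw [hKval] at h1
      refine h1.congr' ?_
      filter_upwards [hltop.eventually (eventually_ge_atTop (0:ℝ))] with ρ hlb
      have hTnn : (0:ℝ) ≤ ∫ x in (Metric.closedBall (0 : EuclideanSpace ℝ (Fin 2))
          ((1 / 2) * (Real.sqrt ((Real.log ρ + b) / (C * ρ)))⁻¹))ᶜ, g ‖x‖ :=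
        setIntegral_nonneg (measurableSet_closedBall (x := (0 : EuclideanSpace ℝ (Fin 2)))
          (ε := (1 / 2) * (Real.sqrt ((Real.log ρ + b) / (C * ρ)))⁻¹)).compl
          (fun x _ => hg0 _ (norm_nonneg x))
      exact ENNReal.toReal_ofReal (mul_nonneg (div_nonneg hlb hCpos.le) hTnn)
    have h2 := ENNReal.tendsto_ofReal ((Real.continuous_exp.tendsto _).comp hAreal)
    exact (ENNReal.Tendsto.const_mul h2 (Or.inr ENNReal.ofReal_ne_top)).congr' hev
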